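/- arXiv:2307.15549 — 2 statements merged into one kernel-verified Lean document; each statement's English description precedes it below -/
import Mathlib

section
/- Shape-independent fixed-point approximation: let ⪯ be an estimator on the flow monoid, let s, t, u be flow graphs with s ⪯ctx t and s ⋆ u defined. Then there exist inflows in_t and in_u with s.in ⪯^{u.X} in_t and u.in ⪯^{s.X} in_u such that t ⌢ u = t[in_t] ⋆ u[in_u] (the multiplication on the right being defined) and s ⋆ u ⪯ctx t ⌢ u. -/
universe u

/-- A flow monoid: a commutative monoid whose natural order
(`m ≤ n ↔ ∃ o, n = m + o`) is a partial order that forms an ω-cpo, with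
continuous addition. `csup` assigns to every ascending chain its join. -/
class FlowMonoid (M : Type u) extends AddCommMonoid M, PartialOrder M, IsOrderedAddMonoid M,
    CanonicallyOrderedAdd M, OrderBot M where
  /-- The join of an ascending chain. -/
  csup : (ℕ → M) → M
  isLUB_csup : ∀ K : ℕ → M, Monotone K → IsLUB (Set.range K) (csup K)
  add_csup : ∀ (n : M) (K : ℕ → M), Monotone K → n + csup K = csup fun i => n + K i

variable {M : Type u} [FlowMonoid M]

/-- Continuity: `f` commutes with joins of ascending chains. -/
def FMCont (f : M → M) : Prop :=
  ∀ K : ℕ → M, Monotone K →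
    IsLUB (Set.range fun i => f (K i)) (f (FlowMonoid.csup K))

/-- A flow graph: a finite set of nodes `X ⊆ ℕ`, continuous edge functions, and
a finitely supported inflow from sources outside `X` into `X`. (The edge
functions of sources outside `X` and the inflow outside its domain are
canonically zero.) -/
structure FlowGraph (M : Type u) [FlowMonoid M] where
  /-- The nodes. -/
  X : Finset ℕ
  /-- The edge functions: `E x y` labels the edge from `x` to `y`. -/
  E : ℕ → ℕ → M → M
  /-- The inflow: `inflow y x` is the flow the graph receives at `x ∈ X` from the
  external node `y ∉ X`. -/
  inflow : ℕ → ℕ → M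
  econt : ∀ x y, x ∈ X → FMCont (E x y)
  edom : ∀ x y, x ∉ X → E x y = fun _ => 0
  inflow_fin : ∀ x, (Function.support fun y => inflow y x).Finite
  inflow_dom : ∀ y x, inflow y x ≠ 0 → y ∉ X ∧ x ∈ X

namespace FlowGraph

/-- One step of the flow fixed-point computation, with inflow `i`. -/
noncomputable def stepWith (h : FlowGraph M) (i : ℕ → ℕ → M) (c : ℕ → M) : ℕ → M :=
  fun x => if x ∈ h.X then (∑ᶠ y, i y x) + ∑ y ∈ h.X, h.E y x (c y) else 0

/-- The flow for a custom inflow `i`, obtained by Kleene iteration: the least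
function satisfying the flow equation. -/
noncomputable def flowWith (h : FlowGraph M) (i : ℕ → ℕ → M) : ℕ → M :=
  fun x => FlowMonoid.csup fun n => (h.stepWith i)^[n] (fun _ => 0) x

/-- The flow of a flow graph. -/
noncomputable def flow (h : FlowGraph M) : ℕ → M := h.flowWith h.inflow

/-- The outflow of a flow graph: `out x y = E x y (flow x)`. -/
noncomputable def out (h : FlowGraph M) (x y : ℕ) : M := h.E x y (h.flow x)

/-- The transfer function: maps an inflow `i` to the resulting outflow at `y`. -/
noncomputable def tf (h : FlowGraph M) (i : ℕ → ℕ → M) (y : ℕ) : M :=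
  ∑ x ∈ h.X, h.E x y (h.flowWith i x)

/-- The ghost multiplication of flow graphs: disjoint union of the node sets and
edges; the inflow of each component is restricted to sources outside the other. -/
def gmul (s t : FlowGraph M) : FlowGraph M where
  X := s.X ∪ t.X
  E := fun x y => if x ∈ s.X then s.E x y else t.E x y
  inflow := fun y x => if y ∈ s.X ∪ t.X then 0 else s.inflow y x + t.inflow y x
  econt := by
    intro x y hx
    try dsimp only
    by_cases hs : x ∈ s.X
    · rw [if_pos hs]; exact s.econt x y hs
    · rw [if_neg hs]
      rcases Finset.mem_union.mp hx with h | h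
      · exact absurd h hs
      · exact t.econt x y h
  edom := by
    intro x y hx
    try dsimp only
    rw [if_neg fun h => hx (Finset.mem_union_left _ h)]
    exact t.edom x y fun h => hx (Finset.mem_union_right _ h)
  inflow_fin := by
    intro x
    refine Set.Finite.subset ((s.inflow_fin x).union (t.inflow_fin x)) ?_
    intro y hy
    rw [Function.mem_support] at hy
    try dsimp only at hy
    by_cases hmem : y ∈ s.X ∪ t.X
    · rw [if_pos hmem] at hy; exact absurd rfl hy
    · rw [if_neg hmem] at hy
      by_cases h1 : s.inflow y x = 0
      · have h2 : t.inflow y x ≠ 0 := fun h2 => hy (by rw [h1, h2, add_zero])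
        exact Set.mem_union_right _ (Function.mem_support.mpr h2)
      · exact Set.mem_union_left _ (Function.mem_support.mpr h1)
  inflow_dom := by
    intro y x hy
    try dsimp only at hy
    by_cases hmem : y ∈ s.X ∪ t.X
    · rw [if_pos hmem] at hy; exact absurd rfl hy
    · rw [if_neg hmem] at hy
      refine ⟨hmem, ?_⟩
      by_cases h1 : s.inflow y x = 0
      · have h2 : t.inflow y x ≠ 0 := fun h2 => hy (by rw [h1, h2, add_zero])
        exact Finset.mem_union_right _ (t.inflow_dom y x h2).2
      · exact Finset.mem_union_left _ (s.inflow_dom y x h1).2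

/-- Definedness of the multiplication `s ⋆ t` of flow graphs: the ghost
multiplication is defined, the inflow expectation of each graph at the mutual
boundary matches the outflow of the other, and the flows are preserved in the
composition (whose result is then `gmul s t`). -/
def MDef (s t : FlowGraph M) : Prop :=
  Disjoint s.X t.X ∧
  (∀ x ∈ s.X, ∀ y ∈ t.X, s.out x y = t.inflow x y ∧ t.out y x = s.inflow y x) ∧
  (∀ x ∈ s.X, (gmul s t).flow x = s.flow x) ∧
  (∀ y ∈ t.X, (gmul s t).flow y = t.flow y)

end FlowGraph

/-- An estimator on the flow monoid: a precongruence that is stable under joins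
of ascending chains and over which the edge functions (i.e. the continuous
functions) are monotonic. -/
def IsEstimator (r : M → M → Prop) : Prop :=
  -- (E1) reflexive and transitive
  (∀ m : M, r m m) ∧
  (∀ m n o : M, r m n → r n o → r m o) ∧
  -- (E2) compatible with addition
  (∀ m n o : M, r m n → r (m + o) (n + o)) ∧
  -- (E3) stable under joins of ascending chains
  (∀ K L : ℕ → M, Monotone K → Monotone L → (∀ i, r (K i) (L i)) →
    r (FlowMonoid.csup K) (FlowMonoid.csup L)) ∧
  -- (E4) edge functions are monotonic
  (∀ f : M → M, FMCont f → ∀ m n : M, r m n → r (f m) (f n))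

/-- The estimator induced on flow graphs: same nodes, same inflow, and the
transfer functions are related for every smaller inflow. -/
def ctxLe (r : M → M → Prop) (s₁ s₂ : FlowGraph M) : Prop :=
  s₁.X = s₂.X ∧ s₁.inflow = s₂.inflow ∧
  ∀ i : ℕ → ℕ → M, (∀ y x, i y x ≤ s₁.inflow y x) →
    ∀ y, y ∉ s₁.X → r (s₁.tf i y) (s₂.tf i y)

/-- `inflowLe r Y X i₁ i₂` is the relation `i₁ ⪯^Y i₂` on inflows over node set
`X`: the inflows agree on all sources outside `Y`, and for each target the sums
of the contributions from `Y` are related by `r`. -/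
def inflowLe (r : M → M → Prop) (Y X : Finset ℕ) (i₁ i₂ : ℕ → ℕ → M) : Prop :=
  (∀ y, y ∉ Y → ∀ x, i₁ y x = i₂ y x) ∧
  (∀ x ∈ X, r (∑ y ∈ Y, i₁ y x) (∑ y ∈ Y, i₂ y x))

namespace FGAux

open FlowMonoid

variable {M : Type u} [FlowMonoid M]

lemma le_csup {K : ℕ → M} (hK : Monotone K) (n : ℕ) : K n ≤ csup K :=
  (isLUB_csup K hK).1 ⟨n, rfl⟩

lemma csup_le {K : ℕ → M} (hK : Monotone K) {m : M} (h : ∀ n, K n ≤ m) : csup K ≤ m :=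
  (isLUB_csup K hK).2 (by rintro _ ⟨n, rfl⟩; exact h n)

lemma csup_const (m : M) : csup (fun _ : ℕ => m) = m :=
  le_antisymm (csup_le monotone_const fun _ => le_rfl) (le_csup monotone_const 0)

lemma csup_mono {K L : ℕ → M} (hK : Monotone K) (hL : Monotone L)
    (h : ∀ n, K n ≤ L n) : csup K ≤ csup L :=
  csup_le hK fun n => (h n).trans (le_csup hL n)

lemma csup_congr {K L : ℕ → M} (h : ∀ n, K n = L n) : csup K = csup L := by
  have : K = L := funext h
  rw [this]

lemma csup_shift {K : ℕ → M} (hK : Monotone K) : csup (fun n => K (n + 1)) = csup K := by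
  refine le_antisymm (csup_le (hK.comp fun a b hab => by omega) fun n => le_csup hK (n + 1))
    (csup_le hK fun n => (hK n.le_succ).trans (le_csup (hK.comp fun a b hab => by omega) n))

lemma mono_of_cont {f : M → M} (hf : FMCont f) : Monotone f := by
  intro a b hab
  set K : ℕ → M := fun n => if n = 0 then a else b with hKdef
  have hK : Monotone K := by
    intro p q hpq
    by_cases hp : p = 0
    · by_cases hq : q = 0 <;> simp [hKdef, hp, hq, hab]
    · have hq : q ≠ 0 := by omega
      simp [hKdef, hp, hq]
  have hcsup : csup K = b := by
    refine le_antisymm (csup_le hK fun n => ?_) (le_csup hK 1)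
    by_cases hn : n = 0 <;> simp [hKdef, hn, hab]
  have h1 := (hf K hK).1 ⟨0, rfl⟩
  rw [hcsup] at h1
  simpa [hKdef] using h1

lemma cont_csup {f : M → M} (hf : FMCont f) {K : ℕ → M} (hK : Monotone K) :
    f (csup K) = csup fun n => f (K n) :=
  (hf K hK).unique (isLUB_csup _ fun a b hab => mono_of_cont hf (hK hab))

lemma csup_add_csup {K L : ℕ → M} (hK : Monotone K) (hL : Monotone L) :
    csup K + csup L = csup fun n => K n + L n := by
  refine le_antisymm ?_ (csup_le (fun a b hab => add_le_add (hK hab) (hL hab))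
    fun n => add_le_add (le_csup hK n) (le_csup hL n))
  rw [add_csup _ L hL]
  refine csup_le (fun a b hab => add_le_add_right (hL hab) _) fun n => ?_
  rw [add_comm, add_csup _ K hK]
  refine csup_le (fun a b hab => add_le_add_right (hK hab) _) fun m => ?_
  calc L n + K m ≤ K (max n m) + L (max n m) := by
        rw [add_comm]; exact add_le_add (hK (le_max_right n m)) (hL (le_max_left n m))
    _ ≤ csup fun p => K p + L p :=
        le_csup (fun a b hab => add_le_add (hK hab) (hL hab)) (max n m)

lemma csup_finsetSum (s : Finset ℕ) (f : ℕ → ℕ → M)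
    (hmono : ∀ y ∈ s, Monotone fun n => f n y) :
    ∑ y ∈ s, csup (fun n => f n y) = csup fun n => ∑ y ∈ s, f n y := by
  classical
  induction s using Finset.induction_on with
  | empty => simp [csup_const (0 : M)]
  | @insert a s' hx ih =>
    rw [Finset.sum_insert hx, ih fun y hy => hmono y (Finset.mem_insert_of_mem hy),
      csup_add_csup (hmono a (Finset.mem_insert_self a s'))
        (fun p q hpq => Finset.sum_le_sum fun y hy =>
          hmono y (Finset.mem_insert_of_mem hy) hpq)]
    exact csup_congr fun n => (Finset.sum_insert hx).symm

lemma finsum_le_finsum (f g : ℕ → M) (hg : (Function.support g).Finite)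
    (h : ∀ y, f y ≤ g y) : ∑ᶠ y, f y ≤ ∑ᶠ y, g y := by
  have hfs : Function.support f ⊆ Function.support g := fun y hy => by
    simp only [Function.mem_support] at hy ⊢
    intro h0
    exact hy (le_antisymm (h0 ▸ h y) (zero_le))
  rw [finsum_eq_sum_of_support_subset f (s := hg.toFinset)
      (by rw [Set.Finite.coe_toFinset]; exact hfs),
    finsum_eq_sum_of_support_subset g (s := hg.toFinset)
      (by rw [Set.Finite.coe_toFinset])]
  exact Finset.sum_le_sum fun y _ => h y

lemma finsum_if (S : Finset ℕ) (G : ℕ → M) (f : ℕ → M) (hf : (Function.support f).Finite)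
    (h0 : ∀ y ∈ S, f y = 0) :
    ∑ᶠ y, (if y ∈ S then G y else f y) = (∑ᶠ y, f y) + ∑ y ∈ S, G y := by
  classical
  have heq : (fun y => if y ∈ S then G y else f y)
      = fun y => f y + if y ∈ S then G y else 0 := by
    funext y
    by_cases hy : y ∈ S <;> simp [hy, h0]
  rw [heq, finsum_add_distrib hf (Set.Finite.subset S.finite_toSet (fun y hy => by
    by_contra hyS
    rw [Function.mem_support] at hy
    exact hy (if_neg hyS)))]
  congr 1
  rw [finsum_eq_sum_of_support_subset _ (s := S) (fun y hy => by
    by_contra hyS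
    rw [Function.mem_support] at hy
    exact hy (if_neg hyS))]
  exact Finset.sum_congr rfl fun y hy => if_pos hy

end FGAux

namespace FGAux

open FlowMonoid FlowGraph

variable {M : Type u} [FlowMonoid M]

/-- iterates of the step function -/
noncomputable def iter (h : FlowGraph M) (i : ℕ → ℕ → M) (n : ℕ) : ℕ → M :=
  (h.stepWith i)^[n] fun _ => 0

lemma flowWith_eq_csup_iter (h : FlowGraph M) (i : ℕ → ℕ → M) (x : ℕ) :
    h.flowWith i x = csup fun n => iter h i n x := rfl

lemma iter_succ (h : FlowGraph M) (i : ℕ → ℕ → M) (n : ℕ) :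
    iter h i (n + 1) = h.stepWith i (iter h i n) := Function.iterate_succ_apply' _ _ _

lemma stepWith_mono' (h : FlowGraph M) (i : ℕ → ℕ → M) {c d : ℕ → M}
    (hcd : ∀ y ∈ h.X, c y ≤ d y) (x : ℕ) : h.stepWith i c x ≤ h.stepWith i d x := by
  unfold FlowGraph.stepWith
  by_cases hx : x ∈ h.X
  · rw [if_pos hx, if_pos hx]
    exact add_le_add_right (Finset.sum_le_sum fun y hy =>
      mono_of_cont (h.econt y x hy) (hcd y hy)) _
  · rw [if_neg hx, if_neg hx]

lemma iter_mono (h : FlowGraph M) (i : ℕ → ℕ → M) :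
    Monotone fun n => iter h i n := by
  refine monotone_nat_of_le_succ fun n => ?_
  induction n with
  | zero => intro x; exact zero_le
  | succ n ih =>
    intro x
    rw [iter_succ, iter_succ]
    exact stepWith_mono' h i (fun y _ => ih y) x

lemma iter_mono_at (h : FlowGraph M) (i : ℕ → ℕ → M) (x : ℕ) :
    Monotone fun n => iter h i n x := fun a b hab => iter_mono h i hab x

lemma stepWith_csup_apply (h : FlowGraph M) (i : ℕ → ℕ → M) (c : ℕ → ℕ → M)
    (hc : ∀ y, Monotone fun n => c n y) (x : ℕ) :
    h.stepWith i (fun y => csup fun n => c n y) x = csup fun n => h.stepWith i (c n) x := by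
  unfold FlowGraph.stepWith
  by_cases hx : x ∈ h.X
  · simp only [if_pos hx]
    have h1 : ∀ y ∈ h.X, h.E y x (csup fun n => c n y) = csup fun n => h.E y x (c n y) :=
      fun y hy => cont_csup (h.econt y x hy) (hc y)
    rw [Finset.sum_congr rfl h1, csup_finsetSum h.X (fun n y => h.E y x (c n y))
      (fun y hy => (mono_of_cont (h.econt y x hy)).comp (hc y)),
      add_csup _ _ (fun a b hab => Finset.sum_le_sum fun y hy =>
        mono_of_cont (h.econt y x hy) (hc y hab))]
  · simp only [if_neg hx]
    exact (csup_const 0).symm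

lemma flowWith_fix (h : FlowGraph M) (i : ℕ → ℕ → M) (x : ℕ) :
    h.stepWith i (h.flowWith i) x = h.flowWith i x := by
  have : h.flowWith i = fun y => csup fun n => iter h i n y := rfl
  rw [this, stepWith_csup_apply h i _ (iter_mono_at h i)]
  dsimp only
  calc (csup fun n => h.stepWith i (iter h i n) x)
      = csup fun n => iter h i (n + 1) x := csup_congr fun n => by rw [iter_succ]
    _ = csup fun n => iter h i n x := csup_shift (iter_mono_at h i x)

/-- leastness of the flow: any pre-fixpoint bounds the flow -/
lemma flowWith_le (h : FlowGraph M) (i : ℕ → ℕ → M) {c : ℕ → M}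
    (hc : ∀ x, h.stepWith i c x ≤ c x) (x : ℕ) : h.flowWith i x ≤ c x := by
  rw [flowWith_eq_csup_iter]
  refine csup_le (iter_mono_at h i x) fun n => ?_
  induction n generalizing x with
  | zero => exact zero_le
  | succ n ih =>
    rw [iter_succ]
    exact le_trans (stepWith_mono' h i (fun y _ => ih y) x) (hc x)

lemma flowWith_mono_inflow (h : FlowGraph M) {i₁ i₂ : ℕ → ℕ → M}
    (hle : ∀ x ∈ h.X, (∑ᶠ y, i₁ y x) ≤ ∑ᶠ y, i₂ y x) (x : ℕ) :
    h.flowWith i₁ x ≤ h.flowWith i₂ x := by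
  rw [flowWith_eq_csup_iter, flowWith_eq_csup_iter]
  refine csup_mono (iter_mono_at h i₁ x) (iter_mono_at h i₂ x) fun n => ?_
  induction n generalizing x with
  | zero => exact le_rfl
  | succ n ih =>
    rw [iter_succ, iter_succ]
    unfold FlowGraph.stepWith
    by_cases hx : x ∈ h.X
    · rw [if_pos hx, if_pos hx]
      exact add_le_add (hle x hx) (Finset.sum_le_sum fun y hy =>
        mono_of_cont (h.econt y x hy) (ih y))
    · rw [if_neg hx, if_neg hx]

lemma flowWith_congr (h : FlowGraph M) {i₁ i₂ : ℕ → ℕ → M}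
    (he : ∀ x ∈ h.X, (∑ᶠ y, i₁ y x) = ∑ᶠ y, i₂ y x) :
    h.flowWith i₁ = h.flowWith i₂ :=
  funext fun x => le_antisymm
    (flowWith_mono_inflow h (fun x hx => (he x hx).le) x)
    (flowWith_mono_inflow h (fun x hx => (he x hx).ge) x)

lemma tf_congr (h : FlowGraph M) {i₁ i₂ : ℕ → ℕ → M}
    (he : ∀ x ∈ h.X, (∑ᶠ y, i₁ y x) = ∑ᶠ y, i₂ y x) : h.tf i₁ = h.tf i₂ := by
  unfold FlowGraph.tf
  rw [flowWith_congr h he]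

end FGAux

namespace FGAux

open FlowMonoid FlowGraph

variable {M : Type u} [FlowMonoid M]

section Estimator

variable {r : M → M → Prop}

lemma r_add (hr : IsEstimator r) {a b c d : M} (hab : r a b) (hcd : r c d) : r (a + c) (b + d) := by
  obtain ⟨-, htrans, haddc, -, -⟩ := hr
  exact htrans _ _ _ (haddc a b c hab) (by rw [add_comm b c, add_comm b d]; exact haddc c d b hcd)

lemma r_sum (hr : IsEstimator r) (s : Finset ℕ) (f g : ℕ → M) (h : ∀ x ∈ s, r (f x) (g x)) :
    r (∑ x ∈ s, f x) (∑ x ∈ s, g x) := by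
  classical
  induction s using Finset.induction_on with
  | empty => simpa using hr.1 0
  | @insert a s' ha ih =>
    rw [Finset.sum_insert ha, Finset.sum_insert ha]
    exact r_add hr (h a (Finset.mem_insert_self a s'))
      (ih fun x hx => h x (Finset.mem_insert_of_mem hx))

lemma flowWith_r (hr : IsEstimator r) (h : FlowGraph M) {i₁ i₂ : ℕ → ℕ → M}
    (hri : ∀ x ∈ h.X, r (∑ᶠ y, i₁ y x) (∑ᶠ y, i₂ y x)) (x : ℕ) :
    r (h.flowWith i₁ x) (h.flowWith i₂ x) := by
  rw [flowWith_eq_csup_iter, flowWith_eq_csup_iter]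
  refine hr.2.2.2.1 _ _ (iter_mono_at h i₁ x) (iter_mono_at h i₂ x) fun n => ?_
  induction n generalizing x with
  | zero => exact hr.1 0
  | succ n ih =>
    rw [iter_succ, iter_succ]
    unfold FlowGraph.stepWith
    by_cases hx : x ∈ h.X
    · rw [if_pos hx, if_pos hx]
      exact r_add hr (hri x hx) (r_sum hr _ _ _ fun y hy =>
        hr.2.2.2.2 _ (h.econt y x hy) _ _ (ih y))
    · rw [if_neg hx, if_neg hx]
      exact hr.1 0

end Estimator

lemma flowGraph_ext {a b : FlowGraph M} (hX : a.X = b.X) (hE : a.E = b.E)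
    (hi : a.inflow = b.inflow) : a = b := by
  cases a; cases b
  simp only at hX hE hi
  subst hX; subst hE; subst hi
  rfl

lemma gmul_comm {a b : FlowGraph M} (hd : Disjoint a.X b.X) : gmul a b = gmul b a := by
  refine flowGraph_ext (Finset.union_comm _ _) ?_ ?_
  · funext x y
    show (if x ∈ a.X then a.E x y else b.E x y) = if x ∈ b.X then b.E x y else a.E x y
    by_cases hxa : x ∈ a.X
    · rw [if_pos hxa, if_neg (Finset.disjoint_left.mp hd hxa)]
    · by_cases hxb : x ∈ b.X
      · rw [if_neg hxa, if_pos hxb]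
      · rw [if_neg hxa, if_neg hxb, a.edom x y hxa, b.edom x y hxb]
  · funext y x
    show (if y ∈ a.X ∪ b.X then 0 else a.inflow y x + b.inflow y x)
        = if y ∈ b.X ∪ a.X then 0 else b.inflow y x + a.inflow y x
    rw [Finset.union_comm b.X a.X, add_comm]

lemma gmul_X (a b : FlowGraph M) : (gmul a b).X = a.X ∪ b.X := rfl

lemma gmul_step (a b : FlowGraph M) (hd : Disjoint a.X b.X) (i : ℕ → ℕ → M)
    (c : ℕ → M) {x : ℕ} (hx : x ∈ a.X ∪ b.X) :
    (gmul a b).stepWith i c x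
      = (∑ᶠ y, i y x) + ((∑ y ∈ a.X, a.E y x (c y)) + ∑ y ∈ b.X, b.E y x (c y)) := by
  unfold FlowGraph.stepWith
  rw [if_pos (show x ∈ (gmul a b).X from hx)]
  congr 1
  show (∑ y ∈ a.X ∪ b.X, (if y ∈ a.X then a.E y x else b.E y x) (c y)) = _
  rw [Finset.sum_union hd]
  congr 1
  · exact Finset.sum_congr rfl fun y hy => by rw [if_pos hy]
  · exact Finset.sum_congr rfl fun y hy => by rw [if_neg (Finset.disjoint_right.mp hd hy)]

end FGAux

namespace FGAux

open FlowMonoid FlowGraph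

variable {M : Type u} [FlowMonoid M]

/-- induced inflow on the first component of a composition -/
noncomputable def indIn (b : FlowGraph M) (i : ℕ → ℕ → M) (F : ℕ → M) : ℕ → ℕ → M :=
  fun y x => if y ∈ b.X then b.E y x (F y) else i y x

lemma finsum_indIn (b : FlowGraph M) (i : ℕ → ℕ → M) (F : ℕ → M) (x : ℕ)
    (hfin : (Function.support fun y => i y x).Finite)
    (hi0 : ∀ y ∈ b.X, i y x = 0) :
    (∑ᶠ y, indIn b i F y x) = (∑ᶠ y, i y x) + ∑ y ∈ b.X, b.E y x (F y) :=
  finsum_if b.X _ _ hfin hi0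

lemma decomp_le (a b : FlowGraph M) (hd : Disjoint a.X b.X) (i : ℕ → ℕ → M)
    (hfin : ∀ x, (Function.support fun y => i y x).Finite)
    (hi0 : ∀ y ∈ a.X ∪ b.X, ∀ x, i y x = 0) (x : ℕ) :
    a.flowWith (indIn b i ((gmul a b).flowWith i)) x
      ≤ if x ∈ a.X then (gmul a b).flowWith i x else 0 := by
  set F := (gmul a b).flowWith i with hF
  refine flowWith_le a _ (c := fun z => if z ∈ a.X then F z else 0) (fun x => ?_) x
  by_cases hx : x ∈ a.X
  · rw [if_pos hx]
    unfold FlowGraph.stepWith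
    rw [if_pos hx]
    dsimp only
    have hc : ∀ y ∈ a.X, (if y ∈ a.X then F y else 0) = F y := fun y hy => if_pos hy
    rw [Finset.sum_congr rfl fun y hy => by rw [hc y hy],
      finsum_indIn b i F x (hfin x) (fun y hy => hi0 y (Finset.mem_union_right _ hy) x)]
    rw [add_assoc, add_comm (∑ y ∈ b.X, b.E y x (F y)) (∑ y ∈ a.X, a.E y x (F y)), ← gmul_step a b hd i F (Finset.mem_union_left _ hx)]
    exact (flowWith_fix (gmul a b) i x).le
  · rw [if_neg hx]
    unfold FlowGraph.stepWith
    rw [if_neg hx]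

lemma decomp (a b : FlowGraph M) (hd : Disjoint a.X b.X) (i : ℕ → ℕ → M)
    (hfin : ∀ x, (Function.support fun y => i y x).Finite)
    (hi0 : ∀ y ∈ a.X ∪ b.X, ∀ x, i y x = 0) {x : ℕ} (hx : x ∈ a.X) :
    (gmul a b).flowWith i x = a.flowWith (indIn b i ((gmul a b).flowWith i)) x := by
  set F := (gmul a b).flowWith i with hF
  have hle_a : ∀ z, a.flowWith (indIn b i F) z ≤ if z ∈ a.X then F z else 0 :=
    decomp_le a b hd i hfin hi0
  have hle_b : ∀ z, b.flowWith (indIn a i F) z ≤ if z ∈ b.X then F z else 0 := by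
    intro z
    have := decomp_le b a hd.symm i hfin
      (fun y hy x => hi0 y (by rwa [Finset.union_comm]) x) z
    rwa [← gmul_comm hd] at this
  refine le_antisymm ?_ (by simpa [hx] using hle_a x)
  have hstep : ∀ z, (gmul a b).stepWith i
      (fun w => if w ∈ a.X then a.flowWith (indIn b i F) w
        else if w ∈ b.X then b.flowWith (indIn a i F) w else 0) z
      ≤ (fun w => if w ∈ a.X then a.flowWith (indIn b i F) w
        else if w ∈ b.X then b.flowWith (indIn a i F) w else 0) z := by
    intro z
    set c := fun w => if w ∈ a.X then a.flowWith (indIn b i F) w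
      else if w ∈ b.X then b.flowWith (indIn a i F) w else 0 with hc
    by_cases hza : z ∈ a.X
    · rw [gmul_step a b hd i c (Finset.mem_union_left _ hza)]
      have h1 : ∀ y ∈ a.X, a.E y z (c y) = a.E y z (a.flowWith (indIn b i F) y) :=
        fun y hy => by rw [hc]; simp only [if_pos hy]
      have h2 : ∀ y ∈ b.X, b.E y z (c y) ≤ b.E y z (F y) := by
        intro y hy
        have hcy : c y = b.flowWith (indIn a i F) y := by
          rw [hc]
          simp only [if_neg (Finset.disjoint_right.mp hd hy), if_pos hy]
        rw [hcy]
        refine mono_of_cont (b.econt y z hy) ?_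
        simpa [hy] using hle_b y
      calc (∑ᶠ y, i y z) + ((∑ y ∈ a.X, a.E y z (c y)) + ∑ y ∈ b.X, b.E y z (c y))
          ≤ (∑ᶠ y, i y z) + ((∑ y ∈ a.X, a.E y z (a.flowWith (indIn b i F) y))
              + ∑ y ∈ b.X, b.E y z (F y)) := by
            refine add_le_add_right (add_le_add ?_ ?_) _
            · exact (Finset.sum_congr rfl h1).le
            · exact Finset.sum_le_sum h2
        _ = (∑ᶠ y, indIn b i F y z) + ∑ y ∈ a.X, a.E y z (a.flowWith (indIn b i F) y) := by
            rw [finsum_indIn b i F z (hfin z)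
              (fun y hy => hi0 y (Finset.mem_union_right _ hy) z)]
            rw [add_assoc, add_comm (∑ y ∈ a.X, a.E y z (a.flowWith (indIn b i F) y)) _]
        _ = a.stepWith (indIn b i F) (a.flowWith (indIn b i F)) z := by
            unfold FlowGraph.stepWith
            rw [if_pos hza]
        _ = a.flowWith (indIn b i F) z := flowWith_fix a _ z
        _ = c z := by rw [hc]; simp only [if_pos hza]
    · by_cases hzb : z ∈ b.X
      · rw [gmul_step a b hd i c (Finset.mem_union_right _ hzb)]
        have h1 : ∀ y ∈ b.X, b.E y z (c y) = b.E y z (b.flowWith (indIn a i F) y) := by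
          intro y hy
          rw [hc]
          simp only [if_neg (Finset.disjoint_right.mp hd hy), if_pos hy]
        have h2 : ∀ y ∈ a.X, a.E y z (c y) ≤ a.E y z (F y) := by
          intro y hy
          have hcy : c y = a.flowWith (indIn b i F) y := by rw [hc]; simp only [if_pos hy]
          rw [hcy]
          refine mono_of_cont (a.econt y z hy) ?_
          simpa [hy] using hle_a y
        calc (∑ᶠ y, i y z) + ((∑ y ∈ a.X, a.E y z (c y)) + ∑ y ∈ b.X, b.E y z (c y))
            ≤ (∑ᶠ y, i y z) + ((∑ y ∈ a.X, a.E y z (F y))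
                + ∑ y ∈ b.X, b.E y z (b.flowWith (indIn a i F) y)) := by
              refine add_le_add_right (add_le_add (Finset.sum_le_sum h2)
                (Finset.sum_congr rfl h1).le) _
          _ = (∑ᶠ y, indIn a i F y z) + ∑ y ∈ b.X, b.E y z (b.flowWith (indIn a i F) y) := by
              rw [finsum_indIn a i F z (hfin z)
                (fun y hy => hi0 y (Finset.mem_union_left _ hy) z)]
              rw [add_assoc]
          _ = b.stepWith (indIn a i F) (b.flowWith (indIn a i F)) z := by
              unfold FlowGraph.stepWith
              rw [if_pos hzb]
          _ = b.flowWith (indIn a i F) z := flowWith_fix b _ z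
          _ = c z := by rw [hc]; simp only [if_neg hza, if_pos hzb]
      · have hz : z ∉ (gmul a b).X := by
          rw [gmul_X]
          simp [hza, hzb]
        unfold FlowGraph.stepWith
        rw [if_neg hz, hc]
        simp [hza, hzb]
    
  have := flowWith_le (gmul a b) i hstep x
  simpa [hx] using this

end FGAux

namespace FGAux

open FlowMonoid FlowGraph

variable {M : Type u} [FlowMonoid M]

/-- componentwise-solve iteration for a composite graph -/
noncomputable def macroChain (a b : FlowGraph M) (i : ℕ → ℕ → M) : ℕ → ℕ → M
  | 0 => fun x => if x ∈ a.X then a.flowWith (fun y x => if y ∈ b.X then 0 else i y x) x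
      else if x ∈ b.X then b.flowWith (fun y x => if y ∈ a.X then 0 else i y x) x else 0
  | n + 1 => fun x =>
      if x ∈ a.X then a.flowWith (indIn b i (macroChain a b i n)) x
      else if x ∈ b.X then b.flowWith (indIn a i (macroChain a b i n)) x else 0

section Macro

variable (a b : FlowGraph M) (i : ℕ → ℕ → M)
  (hd : Disjoint a.X b.X)
  (hfin : ∀ x, (Function.support fun y => i y x).Finite)
  (hi0 : ∀ y ∈ a.X ∪ b.X, ∀ x, i y x = 0)

lemma finsum_zeroIn (S : Finset ℕ) (hfin' : ∀ x, (Function.support fun y => i y x).Finite)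
    (h0 : ∀ y ∈ S, ∀ x, i y x = 0) (x : ℕ) :
    (∑ᶠ y, (if y ∈ S then 0 else i y x)) = ∑ᶠ y, i y x := by
  rw [finsum_if S (fun _ => 0) _ (hfin' x) (fun y hy => h0 y hy x)]
  simp

include hd hfin hi0

lemma macro_mono : ∀ n x, macroChain a b i n x ≤ macroChain a b i (n + 1) x := by
  intro n
  induction n with
  | zero =>
    intro x
    show (if x ∈ a.X then _ else _) ≤ (if x ∈ a.X then _ else _)
    by_cases hxa : x ∈ a.X
    · rw [if_pos hxa, if_pos hxa]
      refine flowWith_mono_inflow a (fun z hz => ?_) x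
      rw [finsum_zeroIn i b.X hfin (fun y hy x => hi0 y (Finset.mem_union_right _ hy) x),
        finsum_indIn b i _ z (hfin z) (fun y hy => hi0 y (Finset.mem_union_right _ hy) z)]
      exact le_add_right le_rfl
    · rw [if_neg hxa, if_neg hxa]
      by_cases hxb : x ∈ b.X
      · rw [if_pos hxb, if_pos hxb]
        refine flowWith_mono_inflow b (fun z hz => ?_) x
        rw [finsum_zeroIn i a.X hfin (fun y hy x => hi0 y (Finset.mem_union_left _ hy) x),
          finsum_indIn a i _ z (hfin z) (fun y hy => hi0 y (Finset.mem_union_left _ hy) z)]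
        exact le_add_right le_rfl
      · rw [if_neg hxb, if_neg hxb]
  | succ n ih =>
    intro x
    show (if x ∈ a.X then _ else _) ≤ (if x ∈ a.X then _ else _)
    by_cases hxa : x ∈ a.X
    · rw [if_pos hxa, if_pos hxa]
      refine flowWith_mono_inflow a (fun z hz => ?_) x
      rw [finsum_indIn b i _ z (hfin z) (fun y hy => hi0 y (Finset.mem_union_right _ hy) z),
        finsum_indIn b i _ z (hfin z) (fun y hy => hi0 y (Finset.mem_union_right _ hy) z)]
      exact add_le_add_right (Finset.sum_le_sum fun y hy =>
        mono_of_cont (b.econt y z hy) (ih y)) _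
    · rw [if_neg hxa, if_neg hxa]
      by_cases hxb : x ∈ b.X
      · rw [if_pos hxb, if_pos hxb]
        refine flowWith_mono_inflow b (fun z hz => ?_) x
        rw [finsum_indIn a i _ z (hfin z) (fun y hy => hi0 y (Finset.mem_union_left _ hy) z),
          finsum_indIn a i _ z (hfin z) (fun y hy => hi0 y (Finset.mem_union_left _ hy) z)]
        exact add_le_add_right (Finset.sum_le_sum fun y hy =>
          mono_of_cont (a.econt y z hy) (ih y)) _
      · rw [if_neg hxb, if_neg hxb]

lemma macro_mono_at (x : ℕ) : Monotone fun n => macroChain a b i n x :=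
  monotone_nat_of_le_succ fun n => macro_mono a b i hd hfin hi0 n x

lemma macro_le_flow : ∀ n x, macroChain a b i n x ≤ (gmul a b).flowWith i x := by
  have hdecomp_a : ∀ x ∈ a.X, (gmul a b).flowWith i x
      = a.flowWith (indIn b i ((gmul a b).flowWith i)) x := fun x hx =>
    decomp a b hd i hfin hi0 hx
  have hdecomp_b : ∀ x ∈ b.X, (gmul a b).flowWith i x
      = b.flowWith (indIn a i ((gmul a b).flowWith i)) x := by
    intro x hx
    have := decomp b a hd.symm i hfin (fun y hy x => hi0 y (by rwa [Finset.union_comm]) x) hx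
    rwa [← gmul_comm hd] at this
  intro n
  induction n with
  | zero =>
    intro x
    show (if x ∈ a.X then _ else _) ≤ _
    by_cases hxa : x ∈ a.X
    · rw [if_pos hxa, hdecomp_a x hxa]
      refine flowWith_mono_inflow a (fun z hz => ?_) x
      rw [finsum_zeroIn i b.X hfin (fun y hy x => hi0 y (Finset.mem_union_right _ hy) x),
        finsum_indIn b i _ z (hfin z) (fun y hy => hi0 y (Finset.mem_union_right _ hy) z)]
      exact le_add_right le_rfl
    · rw [if_neg hxa]
      by_cases hxb : x ∈ b.X
      · rw [if_pos hxb, hdecomp_b x hxb]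
        refine flowWith_mono_inflow b (fun z hz => ?_) x
        rw [finsum_zeroIn i a.X hfin (fun y hy x => hi0 y (Finset.mem_union_left _ hy) x),
          finsum_indIn a i _ z (hfin z) (fun y hy => hi0 y (Finset.mem_union_left _ hy) z)]
        exact le_add_right le_rfl
      · rw [if_neg hxb]
        exact zero_le
  | succ n ih =>
    intro x
    show (if x ∈ a.X then _ else _) ≤ _
    by_cases hxa : x ∈ a.X
    · rw [if_pos hxa, hdecomp_a x hxa]
      refine flowWith_mono_inflow a (fun z hz => ?_) x
      rw [finsum_indIn b i _ z (hfin z) (fun y hy => hi0 y (Finset.mem_union_right _ hy) z),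
        finsum_indIn b i _ z (hfin z) (fun y hy => hi0 y (Finset.mem_union_right _ hy) z)]
      exact add_le_add_right (Finset.sum_le_sum fun y hy =>
        mono_of_cont (b.econt y z hy) (ih y)) _
    · rw [if_neg hxa]
      by_cases hxb : x ∈ b.X
      · rw [if_pos hxb, hdecomp_b x hxb]
        refine flowWith_mono_inflow b (fun z hz => ?_) x
        rw [finsum_indIn a i _ z (hfin z) (fun y hy => hi0 y (Finset.mem_union_left _ hy) z),
          finsum_indIn a i _ z (hfin z) (fun y hy => hi0 y (Finset.mem_union_left _ hy) z)]
        exact add_le_add_right (Finset.sum_le_sum fun y hy =>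
          mono_of_cont (a.econt y z hy) (ih y)) _
      · rw [if_neg hxb]
        exact zero_le

lemma macro_le_self_flowWith : ∀ n, ∀ x ∈ a.X,
    macroChain a b i n x ≤ a.flowWith (indIn b i (macroChain a b i n)) x := by
  intro n x hx
  cases n with
  | zero =>
    show (if x ∈ a.X then _ else _) ≤ _
    rw [if_pos hx]
    refine flowWith_mono_inflow a (fun z hz => ?_) x
    rw [finsum_zeroIn i b.X hfin (fun y hy x => hi0 y (Finset.mem_union_right _ hy) x),
      finsum_indIn b i _ z (hfin z) (fun y hy => hi0 y (Finset.mem_union_right _ hy) z)]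
    exact le_add_right le_rfl
  | succ n =>
    show (if x ∈ a.X then _ else _) ≤ _
    rw [if_pos hx]
    refine flowWith_mono_inflow a (fun z hz => ?_) x
    rw [finsum_indIn b i _ z (hfin z) (fun y hy => hi0 y (Finset.mem_union_right _ hy) z),
      finsum_indIn b i _ z (hfin z) (fun y hy => hi0 y (Finset.mem_union_right _ hy) z)]
    exact add_le_add_right (Finset.sum_le_sum fun y hy =>
      mono_of_cont (b.econt y z hy) (macro_mono a b i hd hfin hi0 n y)) _

lemma macro_le_self_flowWith' : ∀ n, ∀ x ∈ b.X,
    macroChain a b i n x ≤ b.flowWith (indIn a i (macroChain a b i n)) x := by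
  intro n x hx
  have hxa : x ∉ a.X := Finset.disjoint_right.mp hd hx
  cases n with
  | zero =>
    show (if x ∈ a.X then _ else _) ≤ _
    rw [if_neg hxa, if_pos hx]
    refine flowWith_mono_inflow b (fun z hz => ?_) x
    rw [finsum_zeroIn i a.X hfin (fun y hy x => hi0 y (Finset.mem_union_left _ hy) x),
      finsum_indIn a i _ z (hfin z) (fun y hy => hi0 y (Finset.mem_union_left _ hy) z)]
    exact le_add_right le_rfl
  | succ n =>
    show (if x ∈ a.X then _ else _) ≤ _
    rw [if_neg hxa, if_pos hx]
    refine flowWith_mono_inflow b (fun z hz => ?_) x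
    rw [finsum_indIn a i _ z (hfin z) (fun y hy => hi0 y (Finset.mem_union_left _ hy) z),
      finsum_indIn a i _ z (hfin z) (fun y hy => hi0 y (Finset.mem_union_left _ hy) z)]
    exact add_le_add_right (Finset.sum_le_sum fun y hy =>
      mono_of_cont (a.econt y z hy) (macro_mono a b i hd hfin hi0 n y)) _

lemma macro_csup (x : ℕ) :
    csup (fun n => macroChain a b i n x) = (gmul a b).flowWith i x := by
  refine le_antisymm (csup_le (macro_mono_at a b i hd hfin hi0 x)
    fun n => macro_le_flow a b i hd hfin hi0 n x) ?_
  have hstep : ∀ n z, (gmul a b).stepWith i (macroChain a b i n) z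
      ≤ macroChain a b i (n + 1) z := by
    intro n z
    by_cases hza : z ∈ a.X
    · rw [gmul_step a b hd i _ (Finset.mem_union_left _ hza)]
      show _ ≤ (if z ∈ a.X then _ else _)
      rw [if_pos hza]
      calc (∑ᶠ y, i y z) + ((∑ y ∈ a.X, a.E y z (macroChain a b i n y))
              + ∑ y ∈ b.X, b.E y z (macroChain a b i n y))
          = (∑ᶠ y, indIn b i (macroChain a b i n) y z)
              + ∑ y ∈ a.X, a.E y z (macroChain a b i n y) := by
            rw [finsum_indIn b i _ z (hfin z)
              (fun y hy => hi0 y (Finset.mem_union_right _ hy) z), add_assoc,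
              add_comm (∑ y ∈ a.X, a.E y z (macroChain a b i n y)) _]
        _ = a.stepWith (indIn b i (macroChain a b i n)) (macroChain a b i n) z := by
            unfold FlowGraph.stepWith
            rw [if_pos hza]
        _ ≤ a.stepWith (indIn b i (macroChain a b i n))
              (a.flowWith (indIn b i (macroChain a b i n))) z :=
            stepWith_mono' a _ (fun y hy =>
              macro_le_self_flowWith a b i hd hfin hi0 n y hy) z
        _ = a.flowWith (indIn b i (macroChain a b i n)) z := flowWith_fix a _ z
    · by_cases hzb : z ∈ b.X
      · rw [gmul_step a b hd i _ (Finset.mem_union_right _ hzb)]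
        show _ ≤ (if z ∈ a.X then _ else _)
        rw [if_neg hza, if_pos hzb]
        calc (∑ᶠ y, i y z) + ((∑ y ∈ a.X, a.E y z (macroChain a b i n y))
                + ∑ y ∈ b.X, b.E y z (macroChain a b i n y))
            = (∑ᶠ y, indIn a i (macroChain a b i n) y z)
                + ∑ y ∈ b.X, b.E y z (macroChain a b i n y) := by
              rw [finsum_indIn a i _ z (hfin z)
                (fun y hy => hi0 y (Finset.mem_union_left _ hy) z), add_assoc]
          _ = b.stepWith (indIn a i (macroChain a b i n)) (macroChain a b i n) z := by
              unfold FlowGraph.stepWith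
              rw [if_pos hzb]
          _ ≤ b.stepWith (indIn a i (macroChain a b i n))
                (b.flowWith (indIn a i (macroChain a b i n))) z :=
              stepWith_mono' b _ (fun y hy =>
                macro_le_self_flowWith' a b i hd hfin hi0 n y hy) z
          _ = b.flowWith (indIn a i (macroChain a b i n)) z := flowWith_fix b _ z
      · have hz : z ∉ (gmul a b).X := by rw [gmul_X]; simp [hza, hzb]
        unfold FlowGraph.stepWith
        rw [if_neg hz]
        exact zero_le
  refine flowWith_le (gmul a b) i
    (c := fun z => csup fun n => macroChain a b i n z) (fun z => ?_) x
  rw [stepWith_csup_apply (gmul a b) i _ (fun y => macro_mono_at a b i hd hfin hi0 y) z]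
  calc (csup fun n => (gmul a b).stepWith i (macroChain a b i n) z)
      ≤ csup fun n => macroChain a b i (n + 1) z := by
        refine csup_mono ?_ ?_ fun n => hstep n z
        · intro p q hpq
          exact stepWith_mono' (gmul a b) i
            (fun y _ => macro_mono_at a b i hd hfin hi0 y hpq) z
        · exact fun p q hpq => macro_mono_at a b i hd hfin hi0 z (by omega)
    _ = csup fun n => macroChain a b i n z := csup_shift (macro_mono_at a b i hd hfin hi0 z)

end Macro

end FGAux

namespace FGAux

open FlowMonoid FlowGraph

variable {M : Type u} [FlowMonoid M]

lemma gmul_tf (a b : FlowGraph M) (hd : Disjoint a.X b.X) (i : ℕ → ℕ → M) (y : ℕ) :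
    (gmul a b).tf i y = (∑ x ∈ a.X, a.E x y ((gmul a b).flowWith i x))
      + ∑ x ∈ b.X, b.E x y ((gmul a b).flowWith i x) := by
  unfold FlowGraph.tf
  show (∑ x ∈ a.X ∪ b.X, (if x ∈ a.X then a.E x y else b.E x y) ((gmul a b).flowWith i x)) = _
  rw [Finset.sum_union hd]
  congr 1
  · exact Finset.sum_congr rfl fun x hx => by rw [if_pos hx]
  · exact Finset.sum_congr rfl fun x hx => by rw [if_neg (Finset.disjoint_right.mp hd hx)]

lemma stepWith_eq_of {a b : FlowGraph M} (hX : a.X = b.X) (hE : a.E = b.E) :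
    a.stepWith = b.stepWith := by
  funext i c x
  unfold FlowGraph.stepWith
  rw [hX, hE]

lemma flowWith_eq_of {a b : FlowGraph M} (hX : a.X = b.X) (hE : a.E = b.E) :
    a.flowWith = b.flowWith := by
  unfold FlowGraph.flowWith
  rw [stepWith_eq_of hX hE]

lemma key (r : M → M → Prop) (hr : IsEstimator r) (s t u : FlowGraph M)
    (hst : ctxLe r s t) (hsu : MDef s u) (i : ℕ → ℕ → M)
    (hile : ∀ y x, i y x ≤ (gmul s u).inflow y x) :
    (∀ x ∈ u.X, r ((gmul s u).flowWith i x) ((gmul t u).flowWith i x)) ∧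
    (∀ x ∉ s.X, r (∑ y ∈ s.X, s.E y x ((gmul s u).flowWith i y))
      (∑ y ∈ t.X, t.E y x ((gmul t u).flowWith i y))) := by
  obtain ⟨hXst, hin, htf⟩ := hst
  obtain ⟨hdisj, hbnd, hfls, hflu⟩ := hsu
  have hdisj_tu : Disjoint t.X u.X := hXst ▸ hdisj
  have hginfl : ∀ y x, (gmul s u).inflow y x = if y ∈ s.X ∪ u.X then 0
      else s.inflow y x + u.inflow y x := fun y x => rfl
  have hi0 : ∀ y ∈ s.X ∪ u.X, ∀ x, i y x = 0 := by
    intro y hy x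
    have h1 := hile y x
    rw [hginfl, if_pos hy] at h1
    exact le_antisymm h1 (zero_le)
  have hi0t : ∀ y ∈ t.X ∪ u.X, ∀ x, i y x = 0 := by rw [← hXst]; exact hi0
  have hfin : ∀ x, (Function.support fun y => i y x).Finite := by
    intro x
    refine ((gmul s u).inflow_fin x).subset fun y hy => ?_
    rw [Function.mem_support] at hy ⊢
    intro h0
    exact hy (le_antisymm (h0 ▸ hile y x) (zero_le))
  -- i is bounded by s.inflow at targets in s.X
  have hibound : ∀ y x, x ∈ s.X → i y x ≤ s.inflow y x := by
    intro y x hx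
    refine le_trans (hile y x) ?_
    rw [hginfl]
    by_cases hy : y ∈ s.X ∪ u.X
    · rw [if_pos hy]; exact zero_le
    · rw [if_neg hy]
      have hu0 : u.inflow y x = 0 := by
        by_contra h0
        exact Finset.disjoint_left.mp hdisj hx (u.inflow_dom y x h0).2
      rw [hu0, add_zero]
  -- flows with inflow i are below the real flows
  have hFs_le : ∀ x, (gmul s u).flowWith i x ≤ (gmul s u).flow x := by
    intro x
    refine flowWith_mono_inflow (gmul s u) (fun z _ => ?_) x
    exact finsum_le_finsum _ _ ((gmul s u).inflow_fin z) fun y => hile y z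
  -- cross-inflow truncated to targets in s.X is below s.inflow
  have hcross : ∀ C : ℕ → M, (∀ y' ∈ u.X, C y' ≤ (gmul s u).flow y') →
      ∀ y x, (if x ∈ s.X then indIn u i C y x else 0) ≤ s.inflow y x := by
    intro C hC y x
    by_cases hx : x ∈ s.X
    · rw [if_pos hx]
      unfold indIn
      by_cases hy : y ∈ u.X
      · rw [if_pos hy]
        have h1 : C y ≤ u.flow y := (hC y hy).trans (hflu y hy).le
        have h2 : u.E y x (C y) ≤ u.E y x (u.flow y) := mono_of_cont (u.econt y x hy) h1
        have h3 := (hbnd x hx y hy).2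
        unfold FlowGraph.out at h3
        exact h2.trans h3.le
      · rw [if_neg hy]
        exact hibound y x hx
    · rw [if_neg hx]
      exact zero_le
  have hcross0 : ∀ y x, (if x ∈ s.X then (if y ∈ u.X then 0 else i y x) else 0)
      ≤ s.inflow y x := by
    intro y x
    by_cases hx : x ∈ s.X
    · rw [if_pos hx]
      by_cases hy : y ∈ u.X
      · rw [if_pos hy]; exact zero_le
      · rw [if_neg hy]; exact hibound y x hx
    · rw [if_neg hx]; exact zero_le
  -- tf only depends on truncated inflows
  have htrunc_s : ∀ j : ℕ → ℕ → M, s.tf j = s.tf fun y x => if x ∈ s.X then j y x else 0 := by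
    intro j
    refine tf_congr s fun x hx => ?_
    exact finsum_congr fun y => by rw [if_pos hx]
  have htrunc_t : ∀ j : ℕ → ℕ → M, t.tf j = t.tf fun y x => if x ∈ s.X then j y x else 0 := by
    intro j
    refine tf_congr t fun x hx => ?_
    rw [← hXst] at hx
    exact finsum_congr fun y => by rw [if_pos hx]
  -- the two macro chains
  set C : ℕ → ℕ → M := macroChain s u i with hC
  set D : ℕ → ℕ → M := macroChain t u i with hD
  have hCle : ∀ n y, y ∈ u.X → C n y ≤ (gmul s u).flow y :=
    fun n y _ => (macro_le_flow s u i hdisj hfin hi0 n y).trans (hFs_le y)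
  -- the simultaneous induction
  have hS : ∀ n, (∀ x ∈ u.X, r (C n x) (D n x)) ∧
      (∀ x, x ∉ s.X → r (∑ y ∈ s.X, s.E y x (C n y)) (∑ y ∈ t.X, t.E y x (D n y))) := by
    intro n
    induction n with
    | zero =>
      constructor
      · intro x hx
        have hxs : x ∉ s.X := Finset.disjoint_right.mp hdisj hx
        have hxt : x ∉ t.X := Finset.disjoint_right.mp hdisj_tu hx
        have hCx : C 0 x = u.flowWith (fun y x => if y ∈ s.X then 0 else i y x) x := by
          rw [hC]
          show (if x ∈ s.X then _ else _) = _
          rw [if_neg hxs, if_pos hx]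
        have hDx : D 0 x = u.flowWith (fun y x => if y ∈ t.X then 0 else i y x) x := by
          rw [hD]
          show (if x ∈ t.X then _ else _) = _
          rw [if_neg hxt, if_pos hx]
        have heq : (fun y x => if y ∈ s.X then (0 : M) else i y x)
            = fun y x => if y ∈ t.X then 0 else i y x := by rw [hXst]
        rw [hCx, hDx, heq]
        exact hr.1 _
      · intro x hx
        have hL : (∑ y ∈ s.X, s.E y x (C 0 y))
            = s.tf (fun y x => if y ∈ u.X then 0 else i y x) x := by
          unfold FlowGraph.tf
          refine Finset.sum_congr rfl fun y hy => ?_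
          congr 1
          rw [hC]
          show (if y ∈ s.X then _ else _) = _
          rw [if_pos hy]
        have hR : (∑ y ∈ t.X, t.E y x (D 0 y))
            = t.tf (fun y x => if y ∈ u.X then 0 else i y x) x := by
          unfold FlowGraph.tf
          refine Finset.sum_congr rfl fun y hy => ?_
          congr 1
          rw [hD]
          show (if y ∈ t.X then _ else _) = _
          rw [if_pos hy]
        rw [hL, hR, htrunc_s, htrunc_t]
        exact htf _ hcross0 x hx
    | succ n ih =>
      have hstep2 : ∀ x, x ∉ s.X →
          r (∑ y ∈ s.X, s.E y x (C (n+1) y)) (∑ y ∈ t.X, t.E y x (D (n+1) y)) := by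
        intro x hx
        have hL : (∑ y ∈ s.X, s.E y x (C (n+1) y)) = s.tf (indIn u i (C n)) x := by
          unfold FlowGraph.tf
          refine Finset.sum_congr rfl fun y hy => ?_
          congr 1
          rw [hC]
          show (if y ∈ s.X then _ else _) = _
          rw [if_pos hy]
        have hR : (∑ y ∈ t.X, t.E y x (D (n+1) y)) = t.tf (indIn u i (D n)) x := by
          unfold FlowGraph.tf
          refine Finset.sum_congr rfl fun y hy => ?_
          congr 1
          rw [hD]
          show (if y ∈ t.X then _ else _) = _
          rw [if_pos hy]
        rw [hL, hR]
        refine hr.2.1 _ (t.tf (indIn u i (C n)) x) _ ?_ ?_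
        · rw [htrunc_s, htrunc_t]
          exact htf _ (hcross (C n) (fun y' hy' => hCle n y' hy')) x hx
        · -- r (t.tf (indIn u i (C n)) x) (t.tf (indIn u i (D n)) x)
          unfold FlowGraph.tf
          refine r_sum hr _ _ _ fun z hz => ?_
          refine hr.2.2.2.2 _ (t.econt z x hz) _ _ ?_
          refine flowWith_r hr t (fun w hw => ?_) z
          rw [finsum_indIn u i _ w (hfin w) (fun y hy => hi0 y (Finset.mem_union_right _ hy) w),
            finsum_indIn u i _ w (hfin w) (fun y hy => hi0 y (Finset.mem_union_right _ hy) w)]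
          refine r_add hr (hr.1 _) (r_sum hr _ _ _ fun y hy => ?_)
          exact hr.2.2.2.2 _ (u.econt y w hy) _ _ (ih.1 y hy)
      constructor
      · intro x hx
        have hxs : x ∉ s.X := Finset.disjoint_right.mp hdisj hx
        have hxt : x ∉ t.X := Finset.disjoint_right.mp hdisj_tu hx
        have hCx : C (n+1) x = u.flowWith (indIn s i (C n)) x := by
          rw [hC]
          show (if x ∈ s.X then _ else _) = _
          rw [if_neg hxs, if_pos hx]
        have hDx : D (n+1) x = u.flowWith (indIn t i (D n)) x := by
          rw [hD]
          show (if x ∈ t.X then _ else _) = _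
          rw [if_neg hxt, if_pos hx]
        rw [hCx, hDx]
        refine flowWith_r hr u (fun w hw => ?_) x
        rw [finsum_indIn s i _ w (hfin w) (fun y hy => hi0 y (Finset.mem_union_left _ hy) w),
          finsum_indIn t i _ w (hfin w) (fun y hy => hi0t y (Finset.mem_union_left _ hy) w)]
        refine r_add hr (hr.1 _) ?_
        exact ih.2 w (Finset.disjoint_right.mp hdisj hw)
      · exact hstep2
  constructor
  · intro x hx
    rw [← macro_csup s u i hdisj hfin hi0 x, ← macro_csup t u i hdisj_tu hfin hi0t x]
    exact hr.2.2.2.1 _ _ (macro_mono_at s u i hdisj hfin hi0 x)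
      (macro_mono_at t u i hdisj_tu hfin hi0t x) fun n => (hS n).1 x hx
  · intro x hx
    have hL : (∑ y ∈ s.X, s.E y x ((gmul s u).flowWith i y))
        = csup fun n => ∑ y ∈ s.X, s.E y x (C n y) := by
      rw [← csup_finsetSum s.X (fun n y => s.E y x (C n y)) (fun y hy =>
        (mono_of_cont (s.econt y x hy)).comp (macro_mono_at s u i hdisj hfin hi0 y))]
      refine Finset.sum_congr rfl fun y hy => ?_
      rw [← macro_csup s u i hdisj hfin hi0 y,
        cont_csup (s.econt y x hy) (macro_mono_at s u i hdisj hfin hi0 y)]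
    have hR : (∑ y ∈ t.X, t.E y x ((gmul t u).flowWith i y))
        = csup fun n => ∑ y ∈ t.X, t.E y x (D n y) := by
      rw [← csup_finsetSum t.X (fun n y => t.E y x (D n y)) (fun y hy =>
        (mono_of_cont (t.econt y x hy)).comp (macro_mono_at t u i hdisj_tu hfin hi0t y))]
      refine Finset.sum_congr rfl fun y hy => ?_
      rw [← macro_csup t u i hdisj_tu hfin hi0t y,
        cont_csup (t.econt y x hy) (macro_mono_at t u i hdisj_tu hfin hi0t y)]
    rw [hL, hR]
    refine hr.2.2.2.1 _ _ ?_ ?_ fun n => (hS n).2 x hx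
    · exact fun p q hpq => Finset.sum_le_sum fun y hy =>
        mono_of_cont (s.econt y x hy) (macro_mono_at s u i hdisj hfin hi0 y hpq)
    · exact fun p q hpq => Finset.sum_le_sum fun y hy =>
        mono_of_cont (t.econt y x hy) (macro_mono_at t u i hdisj_tu hfin hi0t y hpq)

end FGAux

open FlowGraph in
/-- Shape-independent fixed-point approximation. Let `⪯` be an
estimator, `s ⪯ctx t`, and `s ⋆ u` defined. Then there are inflows `in_t`,
`in_u` with `s.in ⪯^{u.X} in_t` and `u.in ⪯^{s.X} in_u` such that
`t ⌢ u = t[in_t] ⋆ u[in_u]` (the multiplication on the right being defined)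
and `s ⋆ u ⪯ctx t ⌢ u`. -/
theorem shape_independent_fixed_point_approximation (r : M → M → Prop)
    (hr : IsEstimator r) (s t u : FlowGraph M)
    (hst : ctxLe r s t) (hsu : MDef s u) :
    ∃ t' u' : FlowGraph M,
      -- `t' = t[in_t]` with `s.in ⪯^{u.X} in_t`
      t'.X = t.X ∧ t'.E = t.E ∧ inflowLe r u.X t.X s.inflow t'.inflow ∧
      -- `u' = u[in_u]` with `u.in ⪯^{s.X} in_u`
      u'.X = u.X ∧ u'.E = u.E ∧ inflowLe r s.X u.X u.inflow u'.inflow ∧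
      -- `t ⌢ u = t[in_t] ⋆ u[in_u]`, the multiplication being defined
      MDef t' u' ∧ gmul t' u' = gmul t u ∧
      -- `s ⋆ u ⪯ctx t ⌢ u`
      ctxLe r (gmul s u) (gmul t u) := by
  classical
  obtain ⟨hXst, hin, htf⟩ := id hst
  obtain ⟨hdisj, hbnd, hfls, hflu⟩ := id hsu
  have hdisj_tu : Disjoint t.X u.X := hXst ▸ hdisj
  have hgin : (gmul s u).inflow = (gmul t u).inflow := by
    funext y x
    show (if y ∈ s.X ∪ u.X then 0 else s.inflow y x + u.inflow y x)
      = (if y ∈ t.X ∪ u.X then 0 else t.inflow y x + u.inflow y x)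
    rw [hXst, hin]
  have hFteq : (gmul t u).flowWith (gmul s u).inflow = (gmul t u).flow := by rw [hgin]; rfl
  have hkey := FGAux.key r hr s t u hst hsu (gmul s u).inflow (fun y x => le_rfl)
  have K1 : ∀ x ∈ u.X, r ((gmul s u).flow x) ((gmul t u).flow x) := by
    intro x hx
    have h1 := hkey.1 x hx
    rwa [hFteq] at h1
  have K2 : ∀ x, x ∉ s.X → r (∑ y ∈ s.X, s.E y x ((gmul s u).flow y))
      (∑ y ∈ t.X, t.E y x ((gmul t u).flow y)) := by
    intro x hx
    have h1 := hkey.2 x hx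
    rwa [hFteq] at h1
  set Ft : ℕ → M := (gmul t u).flow with hFt
  set Fs : ℕ → M := (gmul s u).flow with hFs
  -- the adjusted inflows
  set it' : ℕ → ℕ → M := fun y x =>
    if y ∈ u.X then (if x ∈ t.X then u.E y x (Ft y) else 0) else t.inflow y x with hit'
  set iu' : ℕ → ℕ → M := fun y x =>
    if y ∈ s.X then (if x ∈ u.X then t.E y x (Ft y) else 0) else u.inflow y x with hiu'
  -- the adjusted graphs
  set t' : FlowGraph M :=
    { X := t.X, E := t.E, inflow := it', econt := t.econt, edom := t.edom
      inflow_fin := fun x => (u.X.finite_toSet.union (t.inflow_fin x)).subset fun y hy => by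
        rw [Function.mem_support] at hy
        by_cases hyu : y ∈ u.X
        · exact Set.mem_union_left _ hyu
        · refine Set.mem_union_right _ (Function.mem_support.mpr ?_)
          rw [hit'] at hy
          simp only [if_neg hyu] at hy
          exact hy
      inflow_dom := fun y x h0 => by
        rw [hit'] at h0
        simp only at h0
        by_cases hyu : y ∈ u.X
        · rw [if_pos hyu] at h0
          by_cases hxt : x ∈ t.X
          · exact ⟨Finset.disjoint_right.mp hdisj_tu hyu, hxt⟩
          · rw [if_neg hxt] at h0
            exact absurd rfl h0
        · rw [if_neg hyu] at h0
          exact t.inflow_dom y x h0 } with ht'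
  set u' : FlowGraph M :=
    { X := u.X, E := u.E, inflow := iu', econt := u.econt, edom := u.edom
      inflow_fin := fun x => (s.X.finite_toSet.union (u.inflow_fin x)).subset fun y hy => by
        rw [Function.mem_support] at hy
        by_cases hys : y ∈ s.X
        · exact Set.mem_union_left _ hys
        · refine Set.mem_union_right _ (Function.mem_support.mpr ?_)
          rw [hiu'] at hy
          simp only [if_neg hys] at hy
          exact hy
      inflow_dom := fun y x h0 => by
        rw [hiu'] at h0
        simp only at h0
        by_cases hys : y ∈ s.X
        · rw [if_pos hys] at h0
          by_cases hxu : x ∈ u.X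
          · exact ⟨Finset.disjoint_left.mp hdisj (hXst ▸ hys), hxu⟩
          · rw [if_neg hxu] at h0
            exact absurd rfl h0
        · rw [if_neg hys] at h0
          exact u.inflow_dom y x h0 } with hu'
  -- the composite graphs agree
  have hgeq : gmul t' u' = gmul t u := by
    refine FGAux.flowGraph_ext rfl rfl ?_
    funext y x
    show (if y ∈ t.X ∪ u.X then 0 else it' y x + iu' y x)
      = (if y ∈ t.X ∪ u.X then 0 else t.inflow y x + u.inflow y x)
    by_cases hy : y ∈ t.X ∪ u.X
    · rw [if_pos hy, if_pos hy]
    · rw [if_neg hy, if_neg hy, hit', hiu']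
      have hyt : y ∉ t.X := fun h => hy (Finset.mem_union_left _ h)
      have hyu : y ∉ u.X := fun h => hy (Finset.mem_union_right _ h)
      have hys : y ∉ s.X := hXst ▸ hyt
      simp only [if_neg hyu, if_neg hys]
  have hgin0 : ∀ y ∈ t.X ∪ u.X, ∀ x, (gmul t u).inflow y x = 0 := fun y hy x => by
    show (if y ∈ t.X ∪ u.X then 0 else _) = 0
    rw [if_pos hy]
  -- decompositions of the composite flow Ft
  have hdec_t : ∀ x ∈ t.X, Ft x = t.flowWith (FGAux.indIn u (gmul t u).inflow Ft) x :=
    fun x hx => FGAux.decomp t u hdisj_tu (gmul t u).inflow (gmul t u).inflow_fin hgin0 hx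
  have hdec_u : ∀ x ∈ u.X, Ft x = u.flowWith (FGAux.indIn t (gmul t u).inflow Ft) x := by
    intro x hx
    have h1 := FGAux.decomp u t hdisj_tu.symm (gmul t u).inflow (gmul t u).inflow_fin
      (fun y hy x => hgin0 y (by rwa [Finset.union_comm]) x) hx
    rwa [← FGAux.gmul_comm hdisj_tu] at h1
  -- flows of the adjusted graphs
  have ht'flow : ∀ x ∈ t.X, t'.flow x = Ft x := by
    intro x hx
    have h1 : t'.flow = t.flowWith it' := by
      show t'.flowWith t'.inflow = t.flowWith it'
      rw [FGAux.flowWith_eq_of (a := t') (b := t) rfl rfl]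
    rw [h1]
    have h2 : t.flowWith it' = t.flowWith (FGAux.indIn u (gmul t u).inflow Ft) := by
      refine FGAux.flowWith_congr t fun z hz => finsum_congr fun y => ?_
      rw [hit']
      show (if y ∈ u.X then (if z ∈ t.X then u.E y z (Ft y) else 0) else t.inflow y z)
        = FGAux.indIn u (gmul t u).inflow Ft y z
      unfold FGAux.indIn
      by_cases hyu : y ∈ u.X
      · rw [if_pos hyu, if_pos hyu, if_pos hz]
      · rw [if_neg hyu, if_neg hyu]
        show t.inflow y z = (if y ∈ t.X ∪ u.X then 0 else t.inflow y z + u.inflow y z)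
        by_cases hyt : y ∈ t.X
        · rw [if_pos (Finset.mem_union_left _ hyt)]
          by_contra h0
          exact (t.inflow_dom y z h0).1 hyt
        · rw [if_neg (by simp [hyt, hyu])]
          have hu0 : u.inflow y z = 0 := by
            by_contra h0
            exact Finset.disjoint_left.mp hdisj_tu hz (u.inflow_dom y z h0).2
          rw [hu0, add_zero]
    rw [h2, ← hdec_t x hx]
  have hu'flow : ∀ x ∈ u.X, u'.flow x = Ft x := by
    intro x hx
    have h1 : u'.flow = u.flowWith iu' := by
      show u'.flowWith u'.inflow = u.flowWith iu'
      rw [FGAux.flowWith_eq_of (a := u') (b := u) rfl rfl]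
    rw [h1]
    have h2 : u.flowWith iu' = u.flowWith (FGAux.indIn t (gmul t u).inflow Ft) := by
      refine FGAux.flowWith_congr u fun z hz => finsum_congr fun y => ?_
      rw [hiu']
      show (if y ∈ s.X then (if z ∈ u.X then t.E y z (Ft y) else 0) else u.inflow y z)
        = FGAux.indIn t (gmul t u).inflow Ft y z
      unfold FGAux.indIn
      rw [hXst]
      by_cases hyt : y ∈ t.X
      · rw [if_pos hyt, if_pos hyt, if_pos hz]
      · rw [if_neg hyt, if_neg hyt]
        show u.inflow y z = (if y ∈ t.X ∪ u.X then 0 else t.inflow y z + u.inflow y z)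
        by_cases hyu : y ∈ u.X
        · rw [if_pos (Finset.mem_union_right _ hyu)]
          by_contra h0
          exact (u.inflow_dom y z h0).1 hyu
        · rw [if_neg (by simp [hyt, hyu])]
          have ht0 : t.inflow y z = 0 := by
            by_contra h0
            exact Finset.disjoint_right.mp hdisj_tu hz (t.inflow_dom y z h0).2
          rw [ht0, zero_add]
    rw [h2, ← hdec_u x hx]
  refine ⟨t', u', rfl, rfl, ⟨?_, ?_⟩, rfl, rfl, ⟨?_, ?_⟩, ⟨hdisj_tu, ?_, ?_, ?_⟩, hgeq, ?_, ?_, ?_⟩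
  · -- s.inflow and it' agree outside u.X
    intro y hy x
    show s.inflow y x = if y ∈ u.X then _ else t.inflow y x
    rw [if_neg hy, hin]
  · -- r on sums over u.X into t.X
    intro x hx
    have hxs : x ∈ s.X := hXst ▸ hx
    have hL : (∑ y ∈ u.X, s.inflow y x) = ∑ y ∈ u.X, u.E y x (Fs y) := by
      refine Finset.sum_congr rfl fun y hy => ?_
      have h3 := (hbnd x hxs y hy).2
      unfold FlowGraph.out at h3
      rw [← h3, hflu y hy]
    have hR : (∑ y ∈ u.X, t'.inflow y x) = ∑ y ∈ u.X, u.E y x (Ft y) := by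
      refine Finset.sum_congr rfl fun y hy => ?_
      show (if y ∈ u.X then (if x ∈ t.X then u.E y x (Ft y) else 0) else t.inflow y x) = _
      rw [if_pos hy, if_pos hx]
    rw [hL, hR]
    exact FGAux.r_sum hr _ _ _ fun y hy => hr.2.2.2.2 _ (u.econt y x hy) _ _ (K1 y hy)
  · -- u.inflow and iu' agree outside s.X
    intro y hy x
    show u.inflow y x = if y ∈ s.X then _ else u.inflow y x
    rw [if_neg hy]
  · -- r on sums over s.X into u.X
    intro x hx
    have hxs : x ∉ s.X := Finset.disjoint_right.mp hdisj hx
    have hL : (∑ y ∈ s.X, u.inflow y x) = ∑ y ∈ s.X, s.E y x (Fs y) := by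
      refine Finset.sum_congr rfl fun y hy => ?_
      have h3 := (hbnd y hy x hx).1
      unfold FlowGraph.out at h3
      rw [← h3, hfls y hy]
    have hR : (∑ y ∈ s.X, u'.inflow y x) = ∑ y ∈ t.X, t.E y x (Ft y) := by
      rw [show (∑ y ∈ s.X, u'.inflow y x) = ∑ y ∈ s.X, t.E y x (Ft y) from
        Finset.sum_congr rfl fun y hy => by
          show (if y ∈ s.X then (if x ∈ u.X then t.E y x (Ft y) else 0) else u.inflow y x) = _
          rw [if_pos hy, if_pos hx], hXst]
    rw [hL, hR]
    exact K2 x hxs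
  · -- boundary conditions
    intro x hx y hy
    have hxs : x ∈ s.X := hXst ▸ hx
    constructor
    · show t'.E x y (t'.flow x) = u'.inflow x y
      have h1 : t'.E x y (t'.flow x) = t.E x y (Ft x) := by rw [ht'flow x hx]
      rw [h1]
      show _ = if x ∈ s.X then (if y ∈ u.X then t.E x y (Ft x) else 0) else u.inflow x y
      rw [if_pos hxs, if_pos hy]
    · show u'.E y x (u'.flow y) = t'.inflow y x
      have h1 : u'.E y x (u'.flow y) = u.E y x (Ft y) := by rw [hu'flow y hy]
      rw [h1]
      show _ = if y ∈ u.X then (if x ∈ t.X then u.E y x (Ft y) else 0) else t.inflow y x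
      rw [if_pos hy, if_pos hx]
  · -- flow preservation on t'
    intro x hx
    rw [hgeq]
    exact (ht'flow x hx).symm ▸ rfl
  · -- flow preservation on u'
    intro x hx
    rw [hgeq]
    exact (hu'flow x hx).symm ▸ rfl
  · -- node sets of the composites agree
    show s.X ∪ u.X = t.X ∪ u.X
    rw [hXst]
  · exact hgin
  · -- transfer functions of the composites are related
    intro i' hi' y hy
    have hkey' := FGAux.key r hr s t u hst hsu i' hi'
    have hys : y ∉ s.X := fun h => hy (Finset.mem_union_left _ h)
    have hyu : y ∉ u.X := fun h => hy (Finset.mem_union_right _ h)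
    rw [FGAux.gmul_tf s u hdisj i' y, FGAux.gmul_tf t u hdisj_tu i' y]
    refine FGAux.r_add hr (hkey'.2 y hys) (FGAux.r_sum hr _ _ _ fun x hx => ?_)
    exact hr.2.2.2.2 _ (u.econt x y hx) _ _ (hkey'.1 x hx)
end

section
/- Monotonicity of flow and transfer function in the inflow: for a flow graph h and inflows in₁ ≤ in₂ (pointwise in the natural order), (i) h[in₁].flow ≤ h[in₂].flow pointwise, and (ii) tf(h)(in₁)(y) ≤ tf(h)(in₂)(y) for every node y outside h.X, where h[inᵢ] denotes h with its inflow replaced by inᵢ. -/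
universe u

variable {M : Type u} [FlowMonoid M]

/-- `i` is an inflow for the node set `X`: finitely supported, from sources
outside `X` into `X`. -/
def IsInflow (X : Finset ℕ) (i : ℕ → ℕ → M) : Prop :=
  (∀ x, (Function.support fun y => i y x).Finite) ∧
  (∀ y x, i y x ≠ 0 → y ∉ X ∧ x ∈ X)

theorem FMCont.mono {f : M → M} (hf : FMCont f) : Monotone f := by
  intro a b hab
  set K : ℕ → M := fun n => if n = 0 then a else b with hK
  have hmono : Monotone K := by
    intro m n hmn
    dsimp [K]
    split <;> split <;> first | rfl | exact hab | omega
  have hcsup : FlowMonoid.csup K = b := by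
    have h1 := FlowMonoid.isLUB_csup K hmono
    have h2 : IsLUB (Set.range K) b := by
      constructor
      · rintro _ ⟨n, rfl⟩
        dsimp [K]; split
        · exact hab
        · rfl
      · intro c hc
        exact hc ⟨1, by simp [K]⟩
    exact h1.unique h2
  have h3 := hf K hmono
  rw [hcsup] at h3
  exact h3.1 ⟨0, by simp [K]⟩

theorem finsum_le_finsum_aux {f g : ℕ → M} (hf : (Function.support f).Finite)
    (hg : (Function.support g).Finite) (h : ∀ y, f y ≤ g y) :
    ∑ᶠ y, f y ≤ ∑ᶠ y, g y := by
  classical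
  have hfin : (Function.support f ∪ Function.support g).Finite := hf.union hg
  rw [finsum_eq_sum_of_support_subset f (s := hfin.toFinset)
    (by intro x hx; simp [Set.Finite.mem_toFinset]; exact Or.inl hx),
    finsum_eq_sum_of_support_subset g (s := hfin.toFinset)
    (by intro x hx; simp [Set.Finite.mem_toFinset]; exact Or.inr hx)]
  exact Finset.sum_le_sum fun i _ => h i

theorem csup_le_csup {K₁ K₂ : ℕ → M} (h₁ : Monotone K₁) (h₂ : Monotone K₂)
    (h : ∀ n, K₁ n ≤ K₂ n) : FlowMonoid.csup K₁ ≤ FlowMonoid.csup K₂ := by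
  have l1 := FlowMonoid.isLUB_csup K₁ h₁
  have l2 := FlowMonoid.isLUB_csup K₂ h₂
  exact l1.2 (by rintro _ ⟨n, rfl⟩; exact (h n).trans (l2.1 ⟨n, rfl⟩))

open FlowGraph in
theorem stepWith_mono (h : FlowGraph M) {i₁ i₂ : ℕ → ℕ → M}
    (hi₁ : ∀ x, (Function.support fun y => i₁ y x).Finite)
    (hi₂ : ∀ x, (Function.support fun y => i₂ y x).Finite)
    (hle : ∀ y x, i₁ y x ≤ i₂ y x) {c₁ c₂ : ℕ → M} (hc : ∀ x, c₁ x ≤ c₂ x) :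
    ∀ x, h.stepWith i₁ c₁ x ≤ h.stepWith i₂ c₂ x := by
  intro x
  unfold FlowGraph.stepWith
  split
  · next hx =>
    refine add_le_add (finsum_le_finsum_aux (hi₁ x) (hi₂ x) fun y => hle y x)
      (Finset.sum_le_sum fun y hy => ?_)
    exact (h.econt y x hy).mono (hc y)
  · rfl

open FlowGraph in
theorem stepWith_mono_c (h : FlowGraph M) (i : ℕ → ℕ → M)
    (hi : ∀ x, (Function.support fun y => i y x).Finite)
    {c₁ c₂ : ℕ → M} (hc : ∀ x, c₁ x ≤ c₂ x) :
    ∀ x, h.stepWith i c₁ x ≤ h.stepWith i c₂ x :=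
  stepWith_mono h hi hi (fun _ _ => le_refl _) hc

open FlowGraph in
theorem iterate_chain_mono (h : FlowGraph M) (i : ℕ → ℕ → M)
    (hi : ∀ x, (Function.support fun y => i y x).Finite) (x : ℕ) :
    Monotone fun n => (h.stepWith i)^[n] (fun _ => 0) x := by
  have key : ∀ n x, (h.stepWith i)^[n] (fun _ => 0) x ≤
      (h.stepWith i)^[n+1] (fun _ => 0) x := by
    intro n
    induction n with
    | zero => intro x; exact zero_le
    | succ m ih =>
      intro x
      rw [Function.iterate_succ_apply', Function.iterate_succ_apply']
      exact stepWith_mono_c h i hi (fun y => ih y) x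
  exact monotone_nat_of_le_succ fun n => key n x

open FlowGraph in
/-- Monotonicity of flow and transfer function in the inflow:
if `in₁ ≤ in₂` pointwise, then the flows and the transfer-function values are
related pointwise in the natural order. -/
theorem flow_tf_monotone_in_inflow (h : FlowGraph M) (i₁ i₂ : ℕ → ℕ → M)
    (hi₁ : IsInflow h.X i₁) (hi₂ : IsInflow h.X i₂)
    (hle : ∀ y x, i₁ y x ≤ i₂ y x) :
    (∀ x, h.flowWith i₁ x ≤ h.flowWith i₂ x) ∧
    (∀ y, y ∉ h.X → h.tf i₁ y ≤ h.tf i₂ y) := by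
  have iter_le : ∀ n x, (h.stepWith i₁)^[n] (fun _ => 0) x ≤
      (h.stepWith i₂)^[n] (fun _ => 0) x := by
    intro n
    induction n with
    | zero => intro x; exact le_refl _
    | succ m ih =>
      intro x
      rw [Function.iterate_succ_apply', Function.iterate_succ_apply']
      exact stepWith_mono h hi₁.1 hi₂.1 hle (fun y => ih y) x
  have hflow : ∀ x, h.flowWith i₁ x ≤ h.flowWith i₂ x := by
    intro x
    exact csup_le_csup (iterate_chain_mono h i₁ hi₁.1 x)
      (iterate_chain_mono h i₂ hi₂.1 x) (fun n => iter_le n x)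
  refine ⟨hflow, fun y _ => ?_⟩
  exact Finset.sum_le_sum fun x hx => (h.econt x y hx).mono (hflow x)
end
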